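/- Suppose (Θ̂₁,…,Θ̂_T) is a tuple of positive definite p×p real matrices that minimizes the GFlsL objective G over all tuples of positive definite p×p real matrices. Then for all integers s, t with 1 ≤ s < t ≤ T+1, ‖(1/T)·∑_{r=s}^{t−1} (Θ̂_r − X_r X_rᵀ)‖_F ≤ 2λ. -/

import Mathlib

open Matrix Finset

/-- Frobenius norm of a real `p × p` matrix. -/
noncomputable def frob {p : ℕ} (A : Matrix (Fin p) (Fin p) ℝ) : ℝ :=
  Real.sqrt (∑ u, ∑ v, (A u v) ^ 2)

/-- The Group Fused least-squares LASSO (GFlsL) objective, with time indices `t = 1, …, T`. -/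
noncomputable def gflsl (p T : ℕ) (X : ℕ → Fin p → ℝ) (lam : ℝ)
    (Θ : ℕ → Matrix (Fin p) (Fin p) ℝ) : ℝ :=
  (1 / (2 * (T : ℝ))) *
      ∑ t ∈ Finset.Icc 1 T,
        ((Θ t)ᵀ * Θ t - (Matrix.vecMulVec (X t) (X t))ᵀ * Θ t
          - (Θ t)ᵀ * Matrix.vecMulVec (X t) (X t)).trace
    + lam * ∑ t ∈ Finset.Icc 2 T, frob (Θ t - Θ (t - 1))


attribute [local instance] Matrix.frobeniusNormedAddCommGroup Matrix.frobeniusIsBoundedSMul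

lemma frob_eq_norm {p : ℕ} (A : Matrix (Fin p) (Fin p) ℝ) : frob A = ‖A‖ := by
  rw [frob, Matrix.frobenius_norm_def, ← Real.sqrt_eq_rpow]
  congr 1
  simp [Real.norm_eq_abs, sq_abs]

lemma frob_nonneg {p : ℕ} (A : Matrix (Fin p) (Fin p) ℝ) : 0 ≤ frob A := Real.sqrt_nonneg _

lemma frob_add_le {p : ℕ} (A B : Matrix (Fin p) (Fin p) ℝ) : frob (A + B) ≤ frob A + frob B := by
  simp only [frob_eq_norm]; exact norm_add_le _ _

lemma frob_smul {p : ℕ} (c : ℝ) (A : Matrix (Fin p) (Fin p) ℝ) : frob (c • A) = |c| * frob A := by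
  haveI := Matrix.frobeniusNormSMulClass (R := ℝ) (α := ℝ) (m := Fin p) (n := Fin p)
  simp only [frob_eq_norm, norm_smul, Real.norm_eq_abs]

lemma trace_transpose_mul_self {p : ℕ} (A : Matrix (Fin p) (Fin p) ℝ) :
    (Aᵀ * A).trace = (frob A) ^ 2 := by
  rw [frob, Real.sq_sqrt (by positivity)]
  simp [Matrix.trace, Matrix.mul_apply, Matrix.diag, sq]
  exact Finset.sum_comm

lemma trace_transpose_mul_comm {p : ℕ} (A B : Matrix (Fin p) (Fin p) ℝ) :
    (Aᵀ * B).trace = (Bᵀ * A).trace := by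
  rw [← Matrix.trace_transpose (Aᵀ * B), Matrix.transpose_mul, Matrix.transpose_transpose]

lemma quad_expand {p : ℕ} (A S M : Matrix (Fin p) (Fin p) ℝ) (ε : ℝ) :
    ((A - ε • M)ᵀ * (A - ε • M) - Sᵀ * (A - ε • M) - (A - ε • M)ᵀ * S).trace
      = (Aᵀ * A - Sᵀ * A - Aᵀ * S).trace
        - 2 * ε * (Mᵀ * (A - S)).trace + ε ^ 2 * (Mᵀ * M).trace := by
  have h1 := trace_transpose_mul_comm A M
  have h2 := trace_transpose_mul_comm S M
  simp only [Matrix.transpose_sub, Matrix.transpose_smul, Matrix.sub_mul, Matrix.mul_sub,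
    Matrix.smul_mul, Matrix.mul_smul, Matrix.trace_sub, Matrix.trace_smul, smul_eq_mul,
    Matrix.trace_add, Matrix.mul_add, Matrix.add_mul]
  rw [h1, h2]
  ring

lemma dot_self_nonneg {p : ℕ} (x : Fin p → ℝ) : 0 ≤ x ⬝ᵥ x := by
  simp only [dotProduct]
  exact Finset.sum_nonneg fun i _ => mul_self_nonneg _

lemma dot_self_pos {p : ℕ} {x : Fin p → ℝ} (hx : x ≠ 0) : 0 < x ⬝ᵥ x := by
  obtain ⟨i, hi⟩ := Function.ne_iff.mp hx
  simp only [dotProduct]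
  exact Finset.sum_pos' (fun j _ => mul_self_nonneg _)
    ⟨i, Finset.mem_univ i, mul_self_pos.mpr (by simpa using hi)⟩

lemma abs_dot_le {p : ℕ} (M : Matrix (Fin p) (Fin p) ℝ) (x : Fin p → ℝ) :
    |x ⬝ᵥ M *ᵥ x| ≤ frob M * (x ⬝ᵥ x) := by
  have h0 : x ⬝ᵥ M *ᵥ x = ∑ ij : Fin p × Fin p, M ij.1 ij.2 * (x ij.1 * x ij.2) := by
    simp only [dotProduct, mulVec, Finset.mul_sum, Fintype.sum_prod_type]
    exact Finset.sum_congr rfl fun i _ => Finset.sum_congr rfl fun j _ => by ring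
  calc |x ⬝ᵥ M *ᵥ x| ≤ ∑ ij : Fin p × Fin p, |M ij.1 ij.2| * |x ij.1 * x ij.2| := by
        rw [h0]
        exact (Finset.abs_sum_le_sum_abs _ _).trans_eq (by simp [abs_mul])
    _ ≤ Real.sqrt (∑ ij : Fin p × Fin p, |M ij.1 ij.2| ^ 2) *
          Real.sqrt (∑ ij : Fin p × Fin p, |x ij.1 * x ij.2| ^ 2) :=
        Real.sum_mul_le_sqrt_mul_sqrt _ _ _
    _ = frob M * (x ⬝ᵥ x) := by
        congr 1
        · rw [frob, Fintype.sum_prod_type]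
          simp [sq_abs]
        · have h1 : ∑ ij : Fin p × Fin p, |x ij.1 * x ij.2| ^ 2 = (∑ i, x i ^ 2) ^ 2 := by
            rw [Fintype.sum_prod_type, sq (∑ i, x i ^ 2), Finset.sum_mul_sum]
            simp [sq_abs, mul_pow]
          rw [h1, Real.sqrt_sq (by positivity)]
          simp [dotProduct, sq]

lemma posdef_coercive {p : ℕ} (hp : 1 ≤ p) {A : Matrix (Fin p) (Fin p) ℝ} (hA : A.PosDef) :
    ∃ c > 0, ∀ x : Fin p → ℝ, c * (x ⬝ᵥ x) ≤ x ⬝ᵥ A *ᵥ x := by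
  haveI : Nonempty (Fin p) := ⟨⟨0, hp⟩⟩
  set f : EuclideanSpace ℝ (Fin p) → ℝ :=
    fun y => (WithLp.equiv 2 (Fin p → ℝ) y) ⬝ᵥ A *ᵥ (WithLp.equiv 2 (Fin p → ℝ) y) with hf
  have hcont : Continuous f := by
    have h1 : Continuous fun y : Fin p → ℝ => y ⬝ᵥ A *ᵥ y := by
      simp only [dotProduct, mulVec]
      refine continuous_finset_sum _ fun i _ => (continuous_apply i).mul ?_
      exact continuous_finset_sum _ fun j _ => continuous_const.mul (continuous_apply j)
    exact h1.comp (PiLp.continuous_ofLp _ _)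
  have hK : IsCompact (Metric.sphere (0 : EuclideanSpace ℝ (Fin p)) 1) := isCompact_sphere _ _
  have hne : (Metric.sphere (0 : EuclideanSpace ℝ (Fin p)) 1).Nonempty :=
    ⟨EuclideanSpace.single ⟨0, hp⟩ (1 : ℝ), by
      simp [mem_sphere_zero_iff_norm, EuclideanSpace.norm_single]⟩
  obtain ⟨u, huS, hmin'⟩ := hK.exists_isMinOn hne hcont.continuousOn
  have hmin : ∀ y ∈ Metric.sphere (0 : EuclideanSpace ℝ (Fin p)) 1, f u ≤ f y := fun y hy => hmin' hy
  have hu1 : ‖u‖ = 1 := mem_sphere_zero_iff_norm.mp huS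
  have hune : (WithLp.equiv 2 (Fin p → ℝ)) u ≠ 0 := by
    intro h
    have : u = 0 := (WithLp.equiv 2 (Fin p → ℝ)).injective (by simpa using h)
    rw [this] at hu1; simp at hu1
  have hc : 0 < f u := by
    have := hA.dotProduct_mulVec_pos hune
    rwa [star_trivial] at this
  refine ⟨f u, hc, fun x => ?_⟩
  by_cases hx : x = 0
  · simp [hx]
  · have hq : 0 < x ⬝ᵥ x := dot_self_pos hx
    set n : ℝ := Real.sqrt (x ⬝ᵥ x) with hn
    have hn0 : 0 < n := Real.sqrt_pos.mpr hq
    have hnn : n * n = x ⬝ᵥ x := Real.mul_self_sqrt hq.le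
    set u' : EuclideanSpace ℝ (Fin p) := (WithLp.equiv 2 (Fin p → ℝ)).symm (n⁻¹ • x) with hu'
    have hu'1 : ‖u'‖ = 1 := by
      rw [EuclideanSpace.norm_eq]
      have : ∀ i, ‖u' i‖ ^ 2 = n⁻¹ * n⁻¹ * (x i * x i) := by
        intro i
        simp only [hu']
        rw [Real.norm_eq_abs, sq_abs]
        show (n⁻¹ * x i) ^ 2 = _
        ring
      rw [Finset.sum_congr rfl fun i _ => this i, ← Finset.mul_sum]
      have hxx : ∑ i, x i * x i = x ⬝ᵥ x := rfl
      rw [hxx, ← hnn]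
      rw [show n⁻¹ * n⁻¹ * (n * n) = 1 by field_simp]
      exact Real.sqrt_one
    have hmem : u' ∈ Metric.sphere (0 : EuclideanSpace ℝ (Fin p)) 1 :=
      mem_sphere_zero_iff_norm.mpr hu'1
    have hle := hmin u' hmem
    have hfu' : f u' = (x ⬝ᵥ x)⁻¹ * (x ⬝ᵥ A *ᵥ x) := by
      simp only [hf, hu', Equiv.apply_symm_apply]
      rw [smul_dotProduct, Matrix.mulVec_smul, dotProduct_smul]
      simp only [smul_eq_mul, ← hnn, mul_inv]
      ring
    rw [hfu'] at hle
    rw [inv_mul_eq_div] at hle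
    exact (le_div_iff₀ hq).mp hle

lemma posdef_perturb {p : ℕ} (hp : 1 ≤ p) {A M : Matrix (Fin p) (Fin p) ℝ}
    (hA : A.PosDef) (hM : M.IsHermitian) :
    ∃ ε₀ > 0, ∀ ε : ℝ, 0 < ε → ε ≤ ε₀ → (A - ε • M).PosDef := by
  obtain ⟨c, hc, hcoer⟩ := posdef_coercive hp hA
  have hFnn := frob_nonneg M
  have hden : (0:ℝ) < 2 * (frob M + 1) := by nlinarith
  refine ⟨c / (2 * (frob M + 1)), div_pos hc hden, fun ε hε hεle => ?_⟩
  rw [Matrix.posDef_iff_dotProduct_mulVec]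
  constructor
  · refine hA.1.sub ?_
    show (ε • M)ᴴ = ε • M
    rw [Matrix.conjTranspose_smul, hM.eq, star_trivial]
  · intro x hx
    rw [star_trivial]
    have hq : 0 < x ⬝ᵥ x := dot_self_pos hx
    have hsplit : x ⬝ᵥ (A - ε • M) *ᵥ x = x ⬝ᵥ A *ᵥ x - ε * (x ⬝ᵥ M *ᵥ x) := by
      rw [Matrix.sub_mulVec, dotProduct_sub, Matrix.smul_mulVec, dotProduct_smul,
        smul_eq_mul]
    rw [hsplit]
    have h1 := hcoer x
    have h2 := abs_dot_le M x
    have h3 : ε * frob M ≤ c / 2 := by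
      rw [le_div_iff₀ hden] at hεle
      nlinarith
    have h4 : ε * (x ⬝ᵥ M *ᵥ x) ≤ (c / 2) * (x ⬝ᵥ x) := by
      have : x ⬝ᵥ M *ᵥ x ≤ frob M * (x ⬝ᵥ x) := (le_abs_self _).trans h2
      nlinarith
    nlinarith

lemma exists_eps_forall {p : ℕ} (hp : 1 ≤ p) (F : Finset ℕ)
    (A : ℕ → Matrix (Fin p) (Fin p) ℝ) (M : Matrix (Fin p) (Fin p) ℝ)
    (hA : ∀ r ∈ F, (A r).PosDef) (hM : M.IsHermitian) :
    ∃ ε₀ > 0, ∀ ε : ℝ, 0 < ε → ε ≤ ε₀ → ∀ r ∈ F, (A r - ε • M).PosDef := by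
  classical
  induction F using Finset.induction with
  | empty => exact ⟨1, one_pos, by simp⟩
  | @insert a s ha ih =>
    obtain ⟨ε₁, hε₁, h1⟩ := ih fun r hr => hA r (Finset.mem_insert_of_mem hr)
    obtain ⟨ε₂, hε₂, h2⟩ := posdef_perturb hp (hA a (Finset.mem_insert_self a s)) hM
    refine ⟨min ε₁ ε₂, lt_min hε₁ hε₂, fun ε hε hle r hr => ?_⟩
    rcases Finset.mem_insert.mp hr with h | h
    · exact h ▸ h2 ε hε (hle.trans (min_le_right _ _))
    · exact h1 ε hε (hle.trans (min_le_left _ _)) r h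

/-- for any minimizer of the GFlsL objective over positive definite tuples,
the normalized partial residual sums are bounded by `2λ` in Frobenius norm. -/
theorem stmt3 (p T : ℕ) (hp : 1 ≤ p) (hT : 1 ≤ T)
    (X : ℕ → Fin p → ℝ) (lam : ℝ) (hlam : 0 < lam)
    (Θhat : ℕ → Matrix (Fin p) (Fin p) ℝ)
    (hPD : ∀ t ∈ Finset.Icc 1 T, (Θhat t).PosDef)
    (hmin : ∀ Θ : ℕ → Matrix (Fin p) (Fin p) ℝ,
      (∀ t ∈ Finset.Icc 1 T, (Θ t).PosDef) →
      gflsl p T X lam Θhat ≤ gflsl p T X lam Θ) :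
    ∀ s t : ℕ, 1 ≤ s → s < t → t ≤ T + 1 →
      frob ((1 / (T : ℝ)) • ∑ r ∈ Finset.Icc s (t - 1),
          (Θhat r - Matrix.vecMulVec (X r) (X r))) ≤ 2 * lam := by
  intro a b ha hab hb
  classical
  have hT0 : (0:ℝ) < (T:ℝ) := by exact_mod_cast hT
  set I : Finset ℕ := Finset.Icc a (b - 1) with hI
  set S : ℕ → Matrix (Fin p) (Fin p) ℝ := fun r => Matrix.vecMulVec (X r) (X r) with hSdef
  set M : Matrix (Fin p) (Fin p) ℝ :=
    (1 / (T : ℝ)) • ∑ r ∈ I, (Θhat r - S r) with hM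
  show frob M ≤ 2 * lam
  set K : ℝ := frob M with hK
  have hKnn : 0 ≤ K := frob_nonneg M
  have hIsub : I ⊆ Finset.Icc 1 T := by
    intro r hr
    rw [hI, Finset.mem_Icc] at hr
    rw [Finset.mem_Icc]
    omega
  have hSherm : ∀ r, (S r).IsHermitian := by
    intro r
    ext i j
    simp [hSdef, Matrix.conjTranspose_apply, Matrix.vecMulVec_apply, mul_comm]
  have hMherm : M.IsHermitian := by
    rw [hM, Matrix.IsHermitian, Matrix.conjTranspose_smul, Matrix.conjTranspose_sum]
    rw [Finset.sum_congr rfl fun r hr => by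
      rw [Matrix.conjTranspose_sub, (hPD r (hIsub hr)).1.eq, (hSherm r).eq]]
    simp
  have hsum : ∑ r ∈ I, (Θhat r - S r) = (T:ℝ) • M := by
    rw [hM, smul_smul]
    rw [show (T:ℝ) * (1 / T) = 1 by field_simp]
    rw [one_smul]
  have htr : (Mᵀ * M).trace = K ^ 2 := trace_transpose_mul_self M
  obtain ⟨ε₀, hε₀, hPDε⟩ := exists_eps_forall hp (Finset.Icc 1 T) Θhat M hPD hMherm
  -- the key inequality
  have key : ∀ ε : ℝ, 0 < ε → ε ≤ ε₀ →
      ε * (K * K) ≤ ε * ε * ((I.card : ℝ) / (2 * T)) * (K * K) + 2 * lam * (ε * K) := by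
    intro ε hε hεle
    set Θε : ℕ → Matrix (Fin p) (Fin p) ℝ :=
      fun r => if r ∈ I then Θhat r - ε • M else Θhat r with hΘε
    have hPDall : ∀ r ∈ Finset.Icc 1 T, (Θε r).PosDef := by
      intro r hr
      simp only [hΘε]
      by_cases hrI : r ∈ I
      · rw [if_pos hrI]; exact hPDε ε hε hεle r hr
      · rw [if_neg hrI]; exact hPD r hr
    have hglobal := hmin Θε hPDall
    -- quadratic part
    have hquad : ∑ r ∈ Finset.Icc 1 T,
        ((Θε r)ᵀ * Θε r - (S r)ᵀ * Θε r - (Θε r)ᵀ * S r).trace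
        = (∑ r ∈ Finset.Icc 1 T,
            ((Θhat r)ᵀ * Θhat r - (S r)ᵀ * Θhat r - (Θhat r)ᵀ * S r).trace)
          - 2 * ε * ((T:ℝ) * K ^ 2) + ε ^ 2 * (I.card : ℝ) * K ^ 2 := by
      have hptq : ∀ r ∈ Finset.Icc 1 T,
          ((Θε r)ᵀ * Θε r - (S r)ᵀ * Θε r - (Θε r)ᵀ * S r).trace
          = ((Θhat r)ᵀ * Θhat r - (S r)ᵀ * Θhat r - (Θhat r)ᵀ * S r).trace
            + (if r ∈ I then
                (ε ^ 2 * (Mᵀ * M).trace - 2 * ε * (Mᵀ * (Θhat r - S r)).trace) else 0) := by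
        intro r _
        by_cases hrI : r ∈ I
        · rw [if_pos hrI]
          rw [show Θε r = Θhat r - ε • M by simp only [hΘε]; rw [if_pos hrI]]
          rw [quad_expand]
          ring
        · rw [if_neg hrI, show Θε r = Θhat r by simp only [hΘε]; rw [if_neg hrI], add_zero]
      have e1 : ∑ r ∈ I, ε ^ 2 * (Mᵀ * M).trace = ε ^ 2 * (I.card : ℝ) * K ^ 2 := by
        rw [Finset.sum_const, htr, nsmul_eq_mul]; ring
      have e2 : ∑ r ∈ I, 2 * ε * (Mᵀ * (Θhat r - S r)).trace
          = 2 * ε * ((T:ℝ) * K ^ 2) := by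
        rw [← Finset.mul_sum, ← Matrix.trace_sum, ← Matrix.mul_sum, hsum,
          Matrix.mul_smul, Matrix.trace_smul, htr, smul_eq_mul]
      rw [Finset.sum_congr rfl hptq, Finset.sum_add_distrib, Finset.sum_ite_mem,
        Finset.inter_eq_right.mpr hIsub, Finset.sum_sub_distrib, e1, e2]
      ring
    -- TV part
    have hTV : ∑ r ∈ Finset.Icc 2 T, frob (Θε r - Θε (r - 1))
        ≤ (∑ r ∈ Finset.Icc 2 T, frob (Θhat r - Θhat (r - 1))) + 2 * (ε * K) := by
      have hptv : ∀ r ∈ Finset.Icc 2 T, frob (Θε r - Θε (r - 1))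
          ≤ frob (Θhat r - Θhat (r - 1))
            + ((if r = a then ε * K else 0) + (if r = b then ε * K else 0)) := by
        intro r hr
        rw [Finset.mem_Icc] at hr
        have hεK : 0 ≤ ε * K := mul_nonneg hε.le hKnn
        have hia : 0 ≤ (if r = a then ε * K else 0) := by split <;> simp [hεK]
        have hib : 0 ≤ (if r = b then ε * K else 0) := by split <;> simp [hεK]
        have hmemI : r ∈ I ↔ (a ≤ r ∧ r ≤ b - 1) := by rw [hI, Finset.mem_Icc]
        have hmemI' : r - 1 ∈ I ↔ (a ≤ r - 1 ∧ r - 1 ≤ b - 1) := by rw [hI, Finset.mem_Icc]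
        by_cases hrI : r ∈ I <;> by_cases hr1I : r - 1 ∈ I
        · -- both in: difference unchanged
          have : Θε r - Θε (r - 1) = Θhat r - Θhat (r - 1) := by
            simp only [hΘε, if_pos hrI, if_pos hr1I]
            abel
          rw [this]
          linarith
        · -- r ∈ I, r-1 ∉ I: r = a
          have hra : r = a := by
            rw [hmemI] at hrI; rw [hmemI'] at hr1I; omega
          have hrb : r ≠ b := by omega
          rw [if_pos hra, if_neg hrb, add_zero]
          have heq : Θε r - Θε (r - 1) = (Θhat r - Θhat (r - 1)) + (-ε) • M := by
            simp only [hΘε, if_pos hrI, if_neg hr1I]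
            rw [neg_smul]; abel
          rw [heq]
          calc frob ((Θhat r - Θhat (r - 1)) + (-ε) • M)
              ≤ frob (Θhat r - Θhat (r - 1)) + frob ((-ε) • M) := frob_add_le _ _
            _ = frob (Θhat r - Θhat (r - 1)) + ε * K := by
                rw [frob_smul, abs_neg, abs_of_pos hε]
        · -- r ∉ I, r-1 ∈ I: r = b
          have hrb : r = b := by
            rw [hmemI] at hrI; rw [hmemI'] at hr1I; omega
          have hra : r ≠ a := by omega
          rw [if_neg hra, if_pos hrb, zero_add]
          have heq : Θε r - Θε (r - 1) = (Θhat r - Θhat (r - 1)) + ε • M := by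
            simp only [hΘε, if_neg hrI, if_pos hr1I]
            abel
          rw [heq]
          calc frob ((Θhat r - Θhat (r - 1)) + ε • M)
              ≤ frob (Θhat r - Θhat (r - 1)) + frob (ε • M) := frob_add_le _ _
            _ = frob (Θhat r - Θhat (r - 1)) + ε * K := by
                rw [frob_smul, abs_of_pos hε]
        · -- neither
          have : Θε r - Θε (r - 1) = Θhat r - Θhat (r - 1) := by
            simp only [hΘε, if_neg hrI, if_neg hr1I]
          rw [this]
          linarith
      calc ∑ r ∈ Finset.Icc 2 T, frob (Θε r - Θε (r - 1))
          ≤ ∑ r ∈ Finset.Icc 2 T, (frob (Θhat r - Θhat (r - 1))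
              + ((if r = a then ε * K else 0) + (if r = b then ε * K else 0))) :=
            Finset.sum_le_sum hptv
        _ = (∑ r ∈ Finset.Icc 2 T, frob (Θhat r - Θhat (r - 1)))
              + ((∑ r ∈ Finset.Icc 2 T, if r = a then ε * K else 0)
                + (∑ r ∈ Finset.Icc 2 T, if r = b then ε * K else 0)) := by
            rw [Finset.sum_add_distrib, Finset.sum_add_distrib]
        _ ≤ (∑ r ∈ Finset.Icc 2 T, frob (Θhat r - Θhat (r - 1))) + 2 * (ε * K) := by
            have hεK : 0 ≤ ε * K := mul_nonneg hε.le hKnn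
            have ha' : (∑ r ∈ Finset.Icc 2 T, if r = a then ε * K else 0) ≤ ε * K := by
              rw [Finset.sum_ite_eq' (Finset.Icc 2 T) a fun _ => ε * K]
              split <;> simp [hεK]
            have hb' : (∑ r ∈ Finset.Icc 2 T, if r = b then ε * K else 0) ≤ ε * K := by
              rw [Finset.sum_ite_eq' (Finset.Icc 2 T) b fun _ => ε * K]
              split <;> simp [hεK]
            linarith
    -- assemble
    simp only [gflsl] at hglobal
    have hS' : ∀ r, Matrix.vecMulVec (X r) (X r) = S r := fun r => rfl
    simp only [hS'] at hglobal
    rw [hquad] at hglobal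
    have hlamTV := mul_le_mul_of_nonneg_left hTV hlam.le
    have hfinal : 0 ≤ (1 / (2 * (T:ℝ))) * (ε ^ 2 * (I.card : ℝ) * K ^ 2
        - 2 * ε * ((T:ℝ) * K ^ 2)) + lam * (2 * (ε * K)) := by
      rw [mul_add] at hlamTV
      linarith [hglobal, hlamTV]
    have hcancel : (1 / (2 * (T:ℝ))) * (2 * ε * ((T:ℝ) * K ^ 2)) = ε * (K * K) := by
      field_simp
    have hone : (1 / (2 * (T:ℝ))) * (ε ^ 2 * (I.card : ℝ) * K ^ 2)
        = ε * ε * ((I.card : ℝ) / (2 * T)) * (K * K) := by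
      rw [div_eq_mul_inv, one_mul, div_eq_mul_inv]; ring
    linarith [hfinal, hcancel, hone]
  -- conclude
  rcases eq_or_lt_of_le hKnn with hK0 | hKpos
  · rw [← hK0]; positivity
  · have hfin : ∀ δ : ℝ, 0 < δ → K ≤ 2 * lam + δ := by
      intro δ hδ
      set D : ℝ := (I.card : ℝ) / (2 * T) * K with hD
      have hDnn : 0 ≤ D := by
        exact mul_nonneg (div_nonneg (Nat.cast_nonneg _) (by linarith)) hKnn
      set ε : ℝ := min ε₀ (δ / (D + 1)) with hε
      have hεpos : 0 < ε := lt_min hε₀ (div_pos hδ (by linarith))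
      have hεle : ε ≤ ε₀ := min_le_left _ _
      have hεD : ε * D ≤ δ := by
        have h1 : ε ≤ δ / (D + 1) := min_le_right _ _
        rw [le_div_iff₀ (by linarith)] at h1
        nlinarith
      have hk := key ε hεpos hεle
      have h2 : ε * K * K ≤ ε * K * (δ + 2 * lam) := by
        have : ε * ε * ((I.card : ℝ) / (2 * T)) * (K * K) = (ε * K) * (ε * D) := by
          rw [hD]; ring
        rw [this] at hk
        have h3 : (ε * K) * (ε * D) ≤ (ε * K) * δ :=
          mul_le_mul_of_nonneg_left hεD (mul_nonneg hεpos.le hKnn)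
        nlinarith
      have hεK : 0 < ε * K := mul_pos hεpos hKpos
      have := le_of_mul_le_mul_left (by linarith [h2] : (ε * K) * K ≤ (ε * K) * (δ + 2 * lam)) hεK
      linarith
    by_contra hcon
    push_neg at hcon
    have := hfin ((K - 2 * lam) / 2) (by linarith)
    linarith
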